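/- arXiv:1803.08586 — 2 statements merged into one kernel-verified Lean document; each statement's English description precedes it below -/
import Mathlib

section
/- Let f₀ : [0,1]^d → ℝ be strongly convex with parameter σ > 0 and smooth, with interior minimizer x*. Then there exist constants c₀, c₁, c₂ > 0 such that for all ε ∈ (0, c₀], the Lebesgue measure μ_{f₀}(ε) of the level set L_{f₀}(ε) = {x : f₀(x) ≤ f₀* + ε} satisfies c₁·ε^{d/2} ≤ μ_{f₀}(ε) ≤ c₂·ε^{d/2}. -/
open Set MeasureTheory

private lemma mono_aux {φ ψ : ℝ → ℝ} (hd : ∀ t, HasDerivAt φ (ψ t) t)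
    (hpos : ∀ t ∈ Set.Ioo (0:ℝ) 1, 0 ≤ ψ t) : MonotoneOn φ (Set.Icc 0 1) := by
  apply monotoneOn_of_deriv_nonneg (convex_Icc 0 1)
  · exact fun t _ => (hd t).continuousAt.continuousWithinAt
  · rw [interior_Icc]
    exact fun t _ => ((hd t).differentiableAt).differentiableWithinAt
  · rw [interior_Icc]
    intro t ht
    rw [(hd t).deriv]
    exact hpos t ht

set_option maxHeartbeats 2000000 in
/-- For a strongly convex and smooth function on the unit cube with interior minimizer,
the Lebesgue measure of the `ε`-sublevel set scales as `ε^{d/2}` for small `ε`. -/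
theorem stmt_4 (d : ℕ) (hd : 1 ≤ d) (f₀ : EuclideanSpace ℝ (Fin d) → ℝ)
    (σ M : ℝ) (hσ : 0 < σ) (hσM : σ ≤ M)
    (cube : Set (EuclideanSpace ℝ (Fin d)))
    (hcube : cube = {x | ∀ i, x i ∈ Set.Icc (0 : ℝ) 1})
    (hf : ContDiff ℝ 2 f₀)
    (hHess : ∀ x ∈ cube, ∀ v : EuclideanSpace ℝ (Fin d),
      σ * ‖v‖ ^ 2 ≤ iteratedFDeriv ℝ 2 f₀ x ![v, v] ∧
      iteratedFDeriv ℝ 2 f₀ x ![v, v] ≤ M * ‖v‖ ^ 2)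
    (xstar : EuclideanSpace ℝ (Fin d)) (hint : xstar ∈ interior cube)
    (hmin : ∀ x ∈ cube, f₀ xstar ≤ f₀ x) :
    ∃ c₀ > (0 : ℝ), ∃ c₁ > (0 : ℝ), ∃ c₂ > (0 : ℝ),
      ∀ ε ∈ Set.Ioc (0 : ℝ) c₀,
        c₁ * ε ^ ((d : ℝ) / 2) ≤
          (volume {x ∈ cube | f₀ x ≤ f₀ xstar + ε}).toReal ∧
        (volume {x ∈ cube | f₀ x ≤ f₀ xstar + ε}).toReal ≤ c₂ * ε ^ ((d : ℝ) / 2) := by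
  have hM : (0:ℝ) < M := lt_of_lt_of_le hσ hσM
  have hdf : Differentiable ℝ f₀ := (hf.of_le one_le_two).differentiable one_ne_zero
  have hfd2 : ContDiff ℝ 1 (fderiv ℝ f₀) := hf.fderiv_right (by norm_num)
  have hdf2 : Differentiable ℝ (fderiv ℝ f₀) := hfd2.differentiable one_ne_zero
  have hxscube : xstar ∈ cube := interior_subset hint
  -- gradient vanishes at the interior minimizer
  have hzero : fderiv ℝ f₀ xstar = 0 := by
    have hloc : IsLocalMin f₀ xstar := by
      have hnb : cube ∈ nhds xstar := mem_interior_iff_mem_nhds.mp hint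
      exact Filter.eventually_of_mem hnb (fun y hy => hmin y hy)
    exact hloc.fderiv_eq_zero
  -- convexity of the cube
  have hconv : Convex ℝ cube := by
    rw [hcube]
    intro x hx y hy a b ha hb hab i
    have := (convex_Icc (0:ℝ) 1) (hx i) (hy i) ha hb hab
    simpa using this
  -- the key quadratic bounds
  have key : ∀ x ∈ cube, σ/2 * ‖x - xstar‖^2 ≤ f₀ x - f₀ xstar ∧
      f₀ x - f₀ xstar ≤ M/2 * ‖x - xstar‖^2 := by
    intro x hx
    set v := x - xstar with hv
    set L : ℝ → EuclideanSpace ℝ (Fin d) := fun t => xstar + t • v with hLdef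
    have hL0 : L 0 = xstar := by simp [hLdef]
    have hL1 : L 1 = x := by simp [hLdef, hv]
    have hLmem : ∀ t ∈ Set.Icc (0:ℝ) 1, L t ∈ cube := by
      intro t ht
      have h := hconv hxscube hx (a := 1 - t) (b := t) (by linarith [ht.2]) ht.1 (by ring)
      have heq : (1-t) • xstar + t • x = xstar + t • v := by
        rw [hv, smul_sub, sub_smul, one_smul]; abel
      rw [heq] at h; exact h
    have hLd : ∀ t : ℝ, HasDerivAt L v t := by
      intro t
      have := ((hasDerivAt_id t).smul_const v).const_add xstar
      simpa [hLdef] using this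
    have hg : ∀ t : ℝ, HasDerivAt (fun s => f₀ (L s)) (fderiv ℝ f₀ (L t) v) t := by
      intro t
      exact (hdf (L t)).hasFDerivAt.comp_hasDerivAt t (hLd t)
    have hG : ∀ t : ℝ, HasDerivAt (fun s => fderiv ℝ f₀ (L s) v)
        (iteratedFDeriv ℝ 2 f₀ (L t) ![v, v]) t := by
      intro t
      have h1 : HasDerivAt (fun s => fderiv ℝ f₀ (L s))
          (fderiv ℝ (fderiv ℝ f₀) (L t) v) t :=
        (hdf2 (L t)).hasFDerivAt.comp_hasDerivAt t (hLd t)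
      have h2 := h1.clm_apply (hasDerivAt_const t v)
      rw [iteratedFDeriv_two_apply]
      simpa using h2
    have hfderiv0 : fderiv ℝ f₀ (L 0) v = 0 := by rw [hL0, hzero]; rfl
    constructor
    · -- lower bound
      have hstep : ∀ t ∈ Set.Icc (0:ℝ) 1, σ * ‖v‖^2 * t ≤ fderiv ℝ f₀ (L t) v := by
        intro t ht
        have mono := mono_aux (φ := fun t => fderiv ℝ f₀ (L t) v - σ * ‖v‖^2 * t)
          (ψ := fun t => iteratedFDeriv ℝ 2 f₀ (L t) ![v, v] - σ * ‖v‖^2)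
          (fun t => by exact ((hG t).sub (((hasDerivAt_id t).const_mul (σ * ‖v‖^2)))).congr_deriv (by simp))
          (fun t ht => by
            have := (hHess (L t) (hLmem t ⟨ht.1.le, ht.2.le⟩) v).1
            linarith)
        have h0 : (0:ℝ) ∈ Set.Icc (0:ℝ) 1 := ⟨le_rfl, zero_le_one⟩
        have := mono h0 ht ht.1
        simp only [hfderiv0] at this
        linarith
      have mono2 := mono_aux (φ := fun t => f₀ (L t) - σ * ‖v‖^2 / 2 * t^2)
        (ψ := fun t => fderiv ℝ f₀ (L t) v - σ * ‖v‖^2 / 2 * (2 * t))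
        (fun t => by
          have h := (hg t).sub ((hasDerivAt_pow 2 t).const_mul (σ * ‖v‖^2 / 2))
          exact h.congr_deriv (by simp))
        (fun t ht => by
          have := hstep t ⟨ht.1.le, ht.2.le⟩
          have h2 : σ * ‖v‖^2 / 2 * (2 * t) = σ * ‖v‖^2 * t := by ring
          linarith)
      have h01 := mono2 ⟨le_rfl, zero_le_one⟩ ⟨zero_le_one, le_rfl⟩ zero_le_one
      simp only [hL0, hL1] at h01
      nlinarith [h01]
    · -- upper bound
      have hstep : ∀ t ∈ Set.Icc (0:ℝ) 1, fderiv ℝ f₀ (L t) v ≤ M * ‖v‖^2 * t := by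
        intro t ht
        have mono := mono_aux (φ := fun t => M * ‖v‖^2 * t - fderiv ℝ f₀ (L t) v)
          (ψ := fun t => M * ‖v‖^2 - iteratedFDeriv ℝ 2 f₀ (L t) ![v, v])
          (fun t => by exact ((((hasDerivAt_id t).const_mul (M * ‖v‖^2))).sub (hG t)).congr_deriv (by simp))
          (fun t ht => by
            have := (hHess (L t) (hLmem t ⟨ht.1.le, ht.2.le⟩) v).2
            linarith)
        have h0 : (0:ℝ) ∈ Set.Icc (0:ℝ) 1 := ⟨le_rfl, zero_le_one⟩
        have := mono h0 ht ht.1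
        simp only [hfderiv0] at this
        linarith
      have mono2 := mono_aux (φ := fun t => M * ‖v‖^2 / 2 * t^2 - f₀ (L t))
        (ψ := fun t => M * ‖v‖^2 / 2 * (2 * t) - fderiv ℝ f₀ (L t) v)
        (fun t => by
          have h := ((hasDerivAt_pow 2 t).const_mul (M * ‖v‖^2 / 2)).sub (hg t)
          exact h.congr_deriv (by simp))
        (fun t ht => by
          have := hstep t ⟨ht.1.le, ht.2.le⟩
          have h2 : M * ‖v‖^2 / 2 * (2 * t) = M * ‖v‖^2 * t := by ring
          linarith)
      have h01 := mono2 ⟨le_rfl, zero_le_one⟩ ⟨zero_le_one, le_rfl⟩ zero_le_one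
      simp only [hL0, hL1] at h01
      nlinarith [h01]
  -- a closed ball inside the cube
  obtain ⟨ρ₀, hρ₀pos, hρ₀⟩ : ∃ ρ > 0, Metric.ball xstar ρ ⊆ cube := by
    have hnb : cube ∈ nhds xstar := mem_interior_iff_mem_nhds.mp hint
    exact Metric.mem_nhds_iff.mp hnb
  set ρ : ℝ := ρ₀ / 2 with hρdef
  have hρpos : 0 < ρ := by positivity
  have hρ : Metric.closedBall xstar ρ ⊆ cube :=
    (Metric.closedBall_subset_ball (by linarith)).trans hρ₀
  -- nontriviality and finrank
  haveI : Nonempty (Fin d) := Fin.pos_iff_nonempty.mp hd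
  haveI : Nontrivial (EuclideanSpace ℝ (Fin d)) := inferInstance
  have hrank : Module.finrank ℝ (EuclideanSpace ℝ (Fin d)) = d := finrank_euclideanSpace_fin
  set B : ℝ := (volume (Metric.ball (0 : EuclideanSpace ℝ (Fin d)) 1)).toReal with hBdef
  have hBpos : 0 < B := by
    apply ENNReal.toReal_pos
    · exact (Metric.measure_ball_pos volume 0 one_pos).ne'
    · exact measure_ball_lt_top.ne
  refine ⟨M * ρ^2 / 2, by positivity, (2/M) ^ ((d:ℝ)/2) * B, by positivity,
    (2/σ) ^ ((d:ℝ)/2) * B, by positivity, ?_⟩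
  intro ε hε
  obtain ⟨hεpos, hεle⟩ := hε
  set S : Set (EuclideanSpace ℝ (Fin d)) := {x ∈ cube | f₀ x ≤ f₀ xstar + ε} with hSdef
  set r₁ : ℝ := Real.sqrt (2 * ε / M) with hr₁def
  set r₂ : ℝ := Real.sqrt (2 * ε / σ) with hr₂def
  have hr₁pos : 0 ≤ r₁ := Real.sqrt_nonneg _
  have hr₂pos : 0 ≤ r₂ := Real.sqrt_nonneg _
  have hr₁sq : r₁^2 = 2 * ε / M := Real.sq_sqrt (by positivity)
  have hr₂sq : r₂^2 = 2 * ε / σ := Real.sq_sqrt (by positivity)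
  have hr₁ρ : r₁ ≤ ρ := by
    rw [hr₁def]
    have : 2 * ε / M ≤ ρ^2 := by
      rw [div_le_iff₀ hM]; nlinarith
    calc Real.sqrt (2 * ε / M) ≤ Real.sqrt (ρ^2) := Real.sqrt_le_sqrt this
      _ = ρ := Real.sqrt_sq hρpos.le
  -- ball inclusion below
  have hsub1 : Metric.closedBall xstar r₁ ⊆ S := by
    intro x hx
    have hxcube : x ∈ cube := hρ (Metric.closedBall_subset_closedBall hr₁ρ hx)
    have hnorm : ‖x - xstar‖ ≤ r₁ := by
      rw [← dist_eq_norm]; exact Metric.mem_closedBall.mp hx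
    have hsq : ‖x - xstar‖^2 ≤ 2 * ε / M := by
      rw [← hr₁sq]; exact pow_le_pow_left₀ (norm_nonneg _) hnorm 2
    have := (key x hxcube).2
    refine ⟨hxcube, ?_⟩
    have : f₀ x - f₀ xstar ≤ M/2 * (2 * ε / M) := by
      calc f₀ x - f₀ xstar ≤ M/2 * ‖x - xstar‖^2 := this
        _ ≤ M/2 * (2 * ε / M) := by
            apply mul_le_mul_of_nonneg_left hsq (by positivity)
    have hMe : M/2 * (2 * ε / M) = ε := by field_simp
    linarith [hMe ▸ this]
  -- inclusion above
  have hsub2 : S ⊆ Metric.closedBall xstar r₂ := by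
    intro x hx
    have := (key x hx.1).1
    have hsq : ‖x - xstar‖^2 ≤ 2 * ε / σ := by
      rw [le_div_iff₀ hσ]; nlinarith [hx.2]
    have : ‖x - xstar‖ ≤ r₂ := by
      rw [hr₂def, ← Real.sqrt_sq (norm_nonneg (x - xstar))]
      exact Real.sqrt_le_sqrt hsq
    rw [Metric.mem_closedBall, dist_eq_norm]; exact this
  -- volumes of the balls
  have hvol1 : volume (Metric.closedBall xstar r₁)
      = ENNReal.ofReal (r₁ ^ d) * volume (Metric.ball (0 : EuclideanSpace ℝ (Fin d)) 1) := by
    rw [Measure.addHaar_closedBall volume xstar hr₁pos, hrank]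
  have hvol2 : volume (Metric.closedBall xstar r₂)
      = ENNReal.ofReal (r₂ ^ d) * volume (Metric.ball (0 : EuclideanSpace ℝ (Fin d)) 1) := by
    rw [Measure.addHaar_closedBall volume xstar hr₂pos, hrank]
  have hfin2 : volume (Metric.closedBall xstar r₂) ≠ ⊤ := measure_closedBall_lt_top.ne
  have hSfin : volume S ≠ ⊤ :=
    ((measure_mono hsub2).trans_lt measure_closedBall_lt_top).ne
  have hlow : (volume (Metric.closedBall xstar r₁)).toReal ≤ (volume S).toReal :=
    ENNReal.toReal_mono hSfin (measure_mono hsub1)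
  have hhigh : (volume S).toReal ≤ (volume (Metric.closedBall xstar r₂)).toReal :=
    ENNReal.toReal_mono hfin2 (measure_mono hsub2)
  have htoReal1 : (volume (Metric.closedBall xstar r₁)).toReal = r₁ ^ d * B := by
    rw [hvol1, ENNReal.toReal_mul, ENNReal.toReal_ofReal (by positivity), hBdef]
  have htoReal2 : (volume (Metric.closedBall xstar r₂)).toReal = r₂ ^ d * B := by
    rw [hvol2, ENNReal.toReal_mul, ENNReal.toReal_ofReal (by positivity), hBdef]
  -- r^d as rpow
  have hpow : ∀ (a : ℝ), 0 < a → (Real.sqrt (2 * ε / a)) ^ d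
      = (2/a) ^ ((d:ℝ)/2) * ε ^ ((d:ℝ)/2) := by
    intro a ha
    have h1 : (0:ℝ) ≤ 2 * ε / a := by positivity
    rw [← Real.rpow_natCast (Real.sqrt (2 * ε / a)) d, Real.sqrt_eq_rpow,
      ← Real.rpow_mul h1]
    have h2 : 2 * ε / a = (2/a) * ε := by ring
    rw [h2, Real.mul_rpow (by positivity) hεpos.le]
    ring_nf
  constructor
  · calc (2/M) ^ ((d:ℝ)/2) * B * ε ^ ((d:ℝ)/2)
        = r₁ ^ d * B := by rw [hr₁def, hpow M hM]; ring
      _ = (volume (Metric.closedBall xstar r₁)).toReal := htoReal1.symm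
      _ ≤ (volume S).toReal := hlow
  · calc (volume S).toReal ≤ (volume (Metric.closedBall xstar r₂)).toReal := hhigh
      _ = r₂ ^ d * B := htoReal2
      _ = (2/σ) ^ ((d:ℝ)/2) * B * ε ^ ((d:ℝ)/2) := by rw [hr₂def, hpow σ hσ]; ring
end

section
/- Let k be a nonnegative integer, α ∈ (k, k+1], and f : B → ℝ a k-times differentiable function on a convex set B ⊆ ℝ^d containing x, such that all partial derivatives of f up to order k are bounded by M and the k-th order partial derivatives are (α-k)-Hölder continuous with constant M with respect to the ℓ∞ norm. Let f̃_x be the degree-k Taylor polynomial of f at x. Then for every z ∈ B with ‖z - x‖_∞ ≤ h, |f(z) - f̃_x(z)| ≤ M·d^k·h^α. -/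
open Set Real

open Function Fin in
theorem hasFTaylorSeriesUpToOn_comp_affine
    {𝕜 : Type*} [NontriviallyNormedField 𝕜]
    {E F G : Type*} [NormedAddCommGroup E] [NormedSpace 𝕜 E]
    [NormedAddCommGroup F] [NormedSpace 𝕜 F] [NormedAddCommGroup G] [NormedSpace 𝕜 G]
    {n : WithTop ℕ∞} {f : E → F} {p : E → FormalMultilinearSeries 𝕜 E F} {s : Set E}
    (hf : HasFTaylorSeriesUpToOn n f p s) (c : E) (g : G →L[𝕜] E) :
    HasFTaylorSeriesUpToOn n (fun t => f (c + g t))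
      (fun t k => (p (c + g t) k).compContinuousLinearMap fun _ => g)
      ((fun t => c + g t) ⁻¹' s) := by
  let A : ∀ m : ℕ, (E[×m]→L[𝕜] F) → G[×m]→L[𝕜] F := fun m h => h.compContinuousLinearMap fun _ => g
  have hA : ∀ m, IsBoundedLinearMap 𝕜 (A m) := fun m =>
    isBoundedLinearMap_continuousMultilinearMap_comp_linear g
  have hAd : ∀ t : G, HasFDerivWithinAt (fun t => c + g t) g ((fun t => c + g t) ⁻¹' s) t :=
    fun t => (g.hasFDerivWithinAt.const_add c)
  constructor
  · intro t ht
    simp only [(hf.zero_eq (c + g t) ht).symm]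
    change (p (c + g t) 0 fun _ : Fin 0 => g 0) = p (c + g t) 0 0
    rw [ContinuousLinearMap.map_zero]
    rfl
  · intro m hm t ht
    convert (hA m).hasFDerivAt.comp_hasFDerivWithinAt t
        ((hf.fderivWithin m hm (c + g t) ht).comp t (hAd t) (Subset.refl _))
    case e'_8 | e'_9 | e'_10 | e'_11 => rfl
    ext y v
    change p (c + g t) (Nat.succ m) (g ∘ cons y v) = p (c + g t) m.succ (cons (g y) (g ∘ v))
    rw [comp_cons]
  · intro m hm
    exact (hA m).continuous.comp_continuousOn <|
      (hf.cont m hm).comp (continuous_const.add g.continuous).continuousOn (Subset.refl _)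

/-- Taylor approximation bound for Hölder-smooth functions: if `f` is `k`-times
differentiable on a convex set `B ⊆ ℝ^d` (with the `ℓ∞` norm), all derivatives up to
order `k` are bounded by `M` and the `k`-th derivative is `(α-k)`-Hölder with constant
`M`, then the degree-`k` Taylor polynomial of `f` at `x` approximates `f` to within
`M d^k h^α` on the `ℓ∞`-ball of radius `h` around `x`. -/
theorem stmt_7 (d : ℕ) (hd : 1 ≤ d) (k : ℕ) (α : ℝ) (hα : (k : ℝ) < α)
    (hα' : α ≤ k + 1) (M : ℝ) (hM : 0 < M)
    (B : Set (Fin d → ℝ)) (hB : Convex ℝ B) (hBu : UniqueDiffOn ℝ B)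
    (x : Fin d → ℝ) (hx : x ∈ B)
    (f : (Fin d → ℝ) → ℝ) (hf : ContDiffOn ℝ k f B)
    (hbound : ∀ j ≤ k, ∀ u ∈ B, ‖iteratedFDerivWithin ℝ j f B u‖ ≤ M)
    (hHolder : ∀ u ∈ B, ∀ v ∈ B,
      ‖iteratedFDerivWithin ℝ k f B u - iteratedFDerivWithin ℝ k f B v‖ ≤
        M * ‖u - v‖ ^ (α - k))
    (h : ℝ) (hh : 0 ≤ h) :
    ∀ z ∈ B, ‖z - x‖ ≤ h →
      |f z - ∑ j ∈ Finset.range (k + 1),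
          ((j.factorial : ℝ))⁻¹ * iteratedFDerivWithin ℝ j f B x (fun _ => z - x)| ≤
        M * d ^ k * h ^ α := by
  intro z hz hzh
  have hα0 : (0:ℝ) < α := lt_of_le_of_lt (Nat.cast_nonneg k) hα
  have hαk : (0:ℝ) ≤ α - k := by linarith
  have hhα : (0:ℝ) ≤ h ^ α := Real.rpow_nonneg hh α
  have hd1 : (1:ℝ) ≤ (d:ℝ) ^ k := one_le_pow₀ (by exact_mod_cast hd)
  set v : Fin d → ℝ := z - x with hv
  set L : ℝ →L[ℝ] (Fin d → ℝ) := ContinuousLinearMap.smulRight (1 : ℝ →L[ℝ] ℝ) v with hLdef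
  have hLapp : ∀ t : ℝ, L t = t • v := fun t => by simp [hLdef]
  set A : ℝ → (Fin d → ℝ) := fun t => x + L t with hAdef
  have hA1 : A 1 = z := by simp [hAdef, hLapp, hv]
  have hA0 : A 0 = x := by simp [hAdef, hLapp]
  have hmemB : ∀ t ∈ Icc (0:ℝ) 1, A t ∈ B := by
    intro t ht
    have h1 : (1 - t) • x + t • z ∈ B := hB hx hz (by linarith [ht.2]) ht.1 (by ring)
    convert h1 using 1
    simp only [hAdef, hLapp, hv]
    module
  have hsub : Icc (0:ℝ) 1 ⊆ A ⁻¹' B := fun t ht => hmemB t ht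
  set g₁ : ℝ → ℝ := fun t => f (x + L t) with hg₁def
  have hq : HasFTaylorSeriesUpToOn (k : ℕ∞) g₁
      (fun t j => (iteratedFDerivWithin ℝ j f B (x + L t)).compContinuousLinearMap fun _ => L)
      (Icc (0:ℝ) 1) :=
    (hasFTaylorSeriesUpToOn_comp_affine (hf.ftaylorSeriesWithin hBu) x L).mono hsub
  have hg₁ : ContDiffOn ℝ (k : ℕ∞) g₁ (Icc (0:ℝ) 1) := hq.contDiffOn
  have hiter : ∀ j, j ≤ k → ∀ t ∈ Icc (0:ℝ) 1,
      iteratedDerivWithin j g₁ (Icc (0:ℝ) 1) t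
        = iteratedFDerivWithin ℝ j f B (A t) (fun _ => v) := by
    intro j hj t ht
    have heq := hq.eq_iteratedFDerivWithin_of_uniqueDiffOn (by exact_mod_cast hj)
      (uniqueDiffOn_Icc one_pos) ht
    rw [iteratedDerivWithin_eq_iteratedFDerivWithin, ← heq]
    simp [hAdef, hLapp]
  have happ : ∀ j (u w : Fin d → ℝ),
      |iteratedFDerivWithin ℝ j f B u (fun _ => v) - iteratedFDerivWithin ℝ j f B w (fun _ => v)|
      ≤ ‖iteratedFDerivWithin ℝ j f B u - iteratedFDerivWithin ℝ j f B w‖ * ‖v‖ ^ j := by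
    intro j u w
    have h1 := (iteratedFDerivWithin ℝ j f B u - iteratedFDerivWithin ℝ j f B w).le_opNorm
      (fun _ : Fin j => v)
    simpa [Real.norm_eq_abs] using h1
  have hvh : ‖v‖ ≤ h := hzh
  cases k with
  | zero =>
    have h0 : iteratedFDerivWithin ℝ 0 f B x (fun _ => v) = f x := by
      simp [iteratedFDerivWithin_zero_apply]
    simp only [zero_add, Finset.sum_range_one, Nat.factorial_zero, Nat.cast_one, inv_one,
      one_mul, pow_zero, mul_one, h0]
    have h1 : |f z - f x| ≤ ‖iteratedFDerivWithin ℝ 0 f B z - iteratedFDerivWithin ℝ 0 f B x‖ := by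
      have h2 := happ 0 z x
      simpa [iteratedFDerivWithin_zero_apply] using h2
    have h2 := hHolder z hz x hx
    calc |f z - f x| ≤ M * ‖z - x‖ ^ (α - (0:ℕ)) := le_trans h1 h2
      _ = M * ‖v‖ ^ α := by norm_num [hv]
      _ ≤ M * h ^ α := by
          exact mul_le_mul_of_nonneg_left (Real.rpow_le_rpow (norm_nonneg _) hvh hα0.le) hM.le
  | succ m =>
    have hg₁' : ContDiffOn ℝ (m : ℕ) g₁ (Icc (0:ℝ) 1) :=
      hg₁.of_le (by exact_mod_cast Nat.le_succ m)
    have hdiffm : DifferentiableOn ℝ (iteratedDerivWithin m g₁ (Icc (0:ℝ) 1)) (Ioo (0:ℝ) 1) :=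
      (hg₁.differentiableOn_iteratedDerivWithin (by exact_mod_cast Nat.lt_succ_self m)
        (uniqueDiffOn_Icc one_pos)).mono Ioo_subset_Icc_self
    obtain ⟨ξ, hξ, hrem⟩ := taylor_mean_remainder_lagrange (f := g₁) (n := m) (x₀ := 0) (x := 1)
      zero_ne_one (by rw [uIcc_of_le zero_le_one]; exact hg₁')
      (by rw [uIcc_of_le zero_le_one, uIoo_of_le zero_le_one]; exact hdiffm)
    rw [uIoo_of_le zero_le_one] at hξ
    rw [uIcc_of_le zero_le_one] at hrem
    have hξI : ξ ∈ Icc (0:ℝ) 1 := Ioo_subset_Icc_self hξ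
    have hAξ : A ξ ∈ B := hmemB ξ hξI
    set Q : ℝ := iteratedFDerivWithin ℝ (m+1) f B (A ξ) (fun _ => v) with hQdef
    set P : ℝ := iteratedFDerivWithin ℝ (m+1) f B x (fun _ => v) with hPdef
    have hDξ : iteratedDerivWithin (m+1) g₁ (Icc (0:ℝ) 1) ξ = Q := hiter (m+1) le_rfl ξ hξI
    have hfz : f z = g₁ 1 := by
      simp only [hg₁def]
      rw [show x + L 1 = z from hA1]
    have hT : taylorWithinEval g₁ m (Icc (0:ℝ) 1) 0 1
        = ∑ j ∈ Finset.range (m+1),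
            ((j.factorial : ℝ))⁻¹ * iteratedFDerivWithin ℝ j f B x (fun _ => v) := by
      rw [taylor_within_apply]
      refine Finset.sum_congr rfl fun j hj => ?_
      rw [hiter j (Finset.mem_range.mp hj).le 0 (left_mem_Icc.mpr zero_le_one), hA0]
      simp [smul_eq_mul, one_div]
    have hmain : f z - ∑ j ∈ Finset.range (m+1+1),
        ((j.factorial : ℝ))⁻¹ * iteratedFDerivWithin ℝ j f B x (fun _ => v)
        = (Q - P) / ((m+1).factorial : ℝ) := by
      rw [Finset.sum_range_succ, hfz, ← hPdef]
      have h2 : g₁ 1 - taylorWithinEval g₁ m (Icc (0:ℝ) 1) 0 1 = Q / ((m+1).factorial : ℝ) := by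
        rw [hrem, hDξ]; norm_num
      have h3 : g₁ 1 - (∑ j ∈ Finset.range (m+1),
          ((j.factorial : ℝ))⁻¹ * iteratedFDerivWithin ℝ j f B x (fun _ => v)
          + ((((m+1).factorial : ℕ) : ℝ))⁻¹ * P)
          = (g₁ 1 - taylorWithinEval g₁ m (Icc (0:ℝ) 1) 0 1)
            - ((((m+1).factorial : ℕ) : ℝ))⁻¹ * P := by
        rw [hT]; ring
      rw [h3, h2]
      field_simp
    rw [hmain]
    have hfac1 : (1:ℝ) ≤ ((m+1).factorial : ℝ) := Nat.one_le_cast.mpr (Nat.factorial_pos _)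
    have hAξx : ‖A ξ - x‖ ≤ h := by
      have he : A ξ - x = ξ • v := by
        simp only [hAdef, hLapp]; abel
      rw [he, norm_smul]
      have h5 : ‖ξ‖ ≤ 1 := by
        rw [Real.norm_eq_abs, abs_of_pos hξ.1]; exact hξ.2.le
      calc ‖ξ‖ * ‖v‖ ≤ 1 * ‖v‖ := mul_le_mul_of_nonneg_right h5 (norm_nonneg _)
        _ = ‖v‖ := one_mul _
        _ ≤ h := hvh
    have hQP : |Q - P| ≤ M * h ^ α := by
      have h1 := happ (m+1) (A ξ) x
      have h2 := hHolder (A ξ) hAξ x hx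
      have h6 : (0:ℝ) ≤ α - ((m+1:ℕ):ℝ) := by push_cast at hα ⊢; linarith
      calc |Q - P| ≤ ‖iteratedFDerivWithin ℝ (m+1) f B (A ξ)
            - iteratedFDerivWithin ℝ (m+1) f B x‖ * ‖v‖ ^ (m+1) := h1
        _ ≤ (M * ‖A ξ - x‖ ^ (α - ((m+1:ℕ):ℝ))) * ‖v‖ ^ (m+1) :=
            mul_le_mul_of_nonneg_right h2 (by positivity)
        _ ≤ (M * h ^ (α - ((m+1:ℕ):ℝ))) * h ^ (m+1) := by
            apply mul_le_mul
            · exact mul_le_mul_of_nonneg_left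
                (Real.rpow_le_rpow (norm_nonneg _) hAξx h6) hM.le
            · exact pow_le_pow_left₀ (norm_nonneg _) hvh _
            · positivity
            · positivity
        _ = M * h ^ α := by
            have hne : α - ((m+1:ℕ):ℝ) + ((m+1:ℕ):ℝ) ≠ 0 := by
              intro h0
              apply hα0.ne'
              linarith
            rw [mul_assoc, ← Real.rpow_natCast h (m+1), ← Real.rpow_add' hh hne]
            congr 1
            congr 1
            ring
    calc |(Q - P) / ((m+1).factorial : ℝ)| = |Q - P| / ((m+1).factorial : ℝ) := by
          rw [abs_div, abs_of_pos (show (0:ℝ) < ((m+1).factorial : ℝ) from Nat.cast_pos.mpr (Nat.factorial_pos _))]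
      _ ≤ |Q - P| := div_le_self (abs_nonneg _) hfac1
      _ ≤ M * h ^ α := hQP
      _ ≤ M * (d:ℝ) ^ (m+1) * h ^ α := mul_le_mul_of_nonneg_right (le_mul_of_one_le_right hM.le hd1) hhα
end
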